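/- Let D be a compact subset of the Euclidean plane (EuclideanSpace ℝ (Fin 2)) with −D = D, star-shaped about the origin (for every x ∈ D the segment from 0 to x is contained in D), and with 0 ∉ frontier D. Let c : ℝ → EuclideanSpace ℝ (Fin 2) be a differentiable curve, periodic with period T > 0, whose range equals frontier D. Then there exist real numbers t₀ and t₁ such that ‖c t₀‖ = ⨆ t, ‖c t‖ and ‖c t₁‖ = ⨅ t, ‖c t‖, and for each i ∈ {0,1}: the inner product ⟪c tᵢ, deriv c tᵢ⟫ = 0, the segment joining −c tᵢ to c tᵢ is contained in D, and there exists sᵢ with c sᵢ = −c tᵢ and ⟪c sᵢ, deriv c sᵢ⟫ = 0. (In billiard language: a centrally symmetric star-shaped plane domain has at least two bouncing ball orbits through the origin, obtained from the maximizer and minimizer of the distance to the origin along the boundary.) -/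

import Mathlib

open scoped RealInnerProductSpace

lemma crit_aux {E : Type*} [NormedAddCommGroup E] [InnerProductSpace ℝ E]
    (c : ℝ → E) (hc : Differentiable ℝ c) (t : ℝ)
    (h : (∀ s, ‖c s‖ ≤ ‖c t‖) ∨ (∀ s, ‖c t‖ ≤ ‖c s‖)) : ⟪c t, deriv c t⟫ = 0 := by
  have hd : HasDerivAt (fun s => ⟪c s, c s⟫) (⟪c t, deriv c t⟫ + ⟪deriv c t, c t⟫) t :=
    HasDerivAt.inner ℝ (hc t).hasDerivAt (hc t).hasDerivAt
  have key : ⟪c t, deriv c t⟫ + ⟪deriv c t, c t⟫ = 0 := by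
    rcases h with h | h
    · have hmax : IsLocalMax (fun s => ⟪c s, c s⟫) t := by
        apply Filter.Eventually.of_forall
        intro s
        simp only [real_inner_self_eq_norm_sq]
        exact pow_le_pow_left₀ (norm_nonneg _) (h s) 2
      exact hmax.hasDerivAt_eq_zero hd
    · have hmin : IsLocalMin (fun s => ⟪c s, c s⟫) t := by
        apply Filter.Eventually.of_forall
        intro s
        simp only [real_inner_self_eq_norm_sq]
        exact pow_le_pow_left₀ (norm_nonneg _) (h s) 2
      exact hmin.hasDerivAt_eq_zero hd
  have hcomm := real_inner_comm (c t) (deriv c t)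
  linarith



/-- A compact, centrally symmetric, star-shaped (about the origin) plane
domain with `0 ∉ frontier D` has at least two bouncing ball orbits through the origin,
obtained from the maximizer and the minimizer of the distance to the origin along a
periodic differentiable parametrization of the boundary. -/
theorem stmt0 (D : Set (EuclideanSpace ℝ (Fin 2))) (hD : IsCompact D)
    (hsym : -D = D) (hstar : ∀ x ∈ D, segment ℝ 0 x ⊆ D)
    (h0 : (0 : EuclideanSpace ℝ (Fin 2)) ∉ frontier D)
    (c : ℝ → EuclideanSpace ℝ (Fin 2)) (hc : Differentiable ℝ c)
    (T : ℝ) (hT : 0 < T) (hper : Function.Periodic c T)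
    (hrange : Set.range c = frontier D) :
    ∃ t₀ t₁ : ℝ,
      ‖c t₀‖ = (⨆ t, ‖c t‖) ∧ ‖c t₁‖ = (⨅ t, ‖c t‖) ∧
      (inner ℝ (c t₀) (deriv c t₀) = (0 : ℝ)) ∧
      segment ℝ (-(c t₀)) (c t₀) ⊆ D ∧
      (∃ s₀ : ℝ, c s₀ = -(c t₀) ∧ inner ℝ (c s₀) (deriv c s₀) = (0 : ℝ)) ∧
      (inner ℝ (c t₁) (deriv c t₁) = (0 : ℝ)) ∧
      segment ℝ (-(c t₁)) (c t₁) ⊆ D ∧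
      (∃ s₁ : ℝ, c s₁ = -(c t₁) ∧ inner ℝ (c s₁) (deriv c s₁) = (0 : ℝ)) := by
  have hDclosed : IsClosed D := hD.isClosed
  have hfr : frontier D ⊆ D := hDclosed.frontier_subset
  -- symmetry of frontier
  have hnegD : ∀ y : EuclideanSpace ℝ (Fin 2), -y ∈ D ↔ y ∈ D := by
    intro y
    conv_lhs => rw [← hsym]
    exact Set.neg_mem_neg
  have hfrsym : ∀ x, x ∈ frontier D → -x ∈ frontier D := by
    intro x hx
    have hfe := (Homeomorph.neg (EuclideanSpace ℝ (Fin 2))).preimage_frontier D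
    have hx' : -x ∈ (Homeomorph.neg (EuclideanSpace ℝ (Fin 2))) ⁻¹' frontier D := by
      refine Set.mem_preimage.mpr ?_
      show -(-x) ∈ frontier D
      rwa [neg_neg]
    rw [hfe] at hx'
    have hpre : (Homeomorph.neg (EuclideanSpace ℝ (Fin 2))) ⁻¹' D = D := by
      ext y
      refine Iff.trans ?_ (hnegD y)
      exact Iff.rfl
    rwa [hpre] at hx'
  -- segment lemma
  have hseg : ∀ x ∈ D, -x ∈ D → segment ℝ (-x) x ⊆ D := by
    intro x hx hnx y hy
    rcases hy with ⟨a, b, ha, hb, hab, rfl⟩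
    by_cases hba : b ≤ a
    · have : a • (-x) + b • x = (a - b) • (-x) := by
        rw [smul_neg, smul_neg, sub_smul]; abel
      rw [this]
      refine hstar _ hnx ⟨1 - (a - b), a - b, by linarith, by linarith, by ring, by simp⟩
    · have : a • (-x) + b • x = (b - a) • x := by
        rw [smul_neg, sub_smul]; abel
      rw [this]
      refine hstar _ hx ⟨1 - (b - a), b - a, by linarith, by linarith, by ring, by simp⟩
  -- continuity
  have hcont : Continuous fun t => ‖c t‖ := hc.continuous.norm
  -- extrema on [0, T]
  obtain ⟨t₀, ht₀I, ht₀⟩ := (isCompact_Icc : IsCompact (Set.Icc (0:ℝ) T)).exists_isMaxOn (Set.nonempty_Icc.mpr hT.le)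
    hcont.continuousOn
  obtain ⟨t₁, ht₁I, ht₁⟩ := (isCompact_Icc : IsCompact (Set.Icc (0:ℝ) T)).exists_isMinOn (Set.nonempty_Icc.mpr hT.le)
    hcont.continuousOn
  have hpn : Function.Periodic (fun t => ‖c t‖) T := fun t => by simp [hper t]
  have hmax : ∀ s, ‖c s‖ ≤ ‖c t₀‖ := by
    intro s
    obtain ⟨y, hy, hys⟩ := hpn.exists_mem_Ico₀ hT s
    rw [hys]
    exact ht₀ (Set.mem_Icc.mpr ⟨hy.1, hy.2.le⟩)
  have hmin : ∀ s, ‖c t₁‖ ≤ ‖c s‖ := by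
    intro s
    obtain ⟨y, hy, hys⟩ := hpn.exists_mem_Ico₀ hT s
    rw [hys]
    exact ht₁ (Set.mem_Icc.mpr ⟨hy.1, hy.2.le⟩)
  refine ⟨t₀, t₁, ?_, ?_, ?_, ?_, ?_, ?_, ?_, ?_⟩
  · exact le_antisymm (le_ciSup ⟨‖c t₀‖, Set.forall_mem_range.mpr hmax⟩ t₀) (ciSup_le hmax)
  · exact le_antisymm (le_ciInf hmin)
      (ciInf_le ⟨0, Set.forall_mem_range.mpr fun t => norm_nonneg _⟩ t₁)
  · exact crit_aux c hc t₀ (Or.inl hmax)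
  · have hx : c t₀ ∈ frontier D := hrange ▸ Set.mem_range_self t₀
    exact hseg _ (hfr hx) (hfr (hfrsym _ hx))
  · have hx : c t₀ ∈ frontier D := hrange ▸ Set.mem_range_self t₀
    have : -c t₀ ∈ Set.range c := hrange ▸ hfrsym _ hx
    obtain ⟨s₀, hs₀⟩ := this
    refine ⟨s₀, hs₀, crit_aux c hc s₀ (Or.inl ?_)⟩
    intro s
    rw [hs₀, norm_neg]
    exact hmax s
  · exact crit_aux c hc t₁ (Or.inr hmin)
  · have hx : c t₁ ∈ frontier D := hrange ▸ Set.mem_range_self t₁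
    exact hseg _ (hfr hx) (hfr (hfrsym _ hx))
  · have hx : c t₁ ∈ frontier D := hrange ▸ Set.mem_range_self t₁
    have : -c t₁ ∈ Set.range c := hrange ▸ hfrsym _ hx
    obtain ⟨s₁, hs₁⟩ := this
    refine ⟨s₁, hs₁, crit_aux c hc s₁ (Or.inr ?_)⟩
    intro s
    rw [hs₁, norm_neg]
    exact hmin s
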